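/- For finite sets C_0, ..., C_d in R^d each containing the origin in the relative interior of its convex hull, there exists a transversal S (one point from each C_i) whose convex hull contains the origin. -/

import Mathlib

set_option linter.unusedSectionVars false

open Metric Set Finset
open scoped RealInnerProductSpace

variable {E : Type*} [NormedAddCommGroup E] [InnerProductSpace ℝ E] [FiniteDimensional ℝ E]

/-- If `0` is in the convex hull of `A`, then for any `x` there is `y ∈ A` with `⟪x,y⟫ ≤ 0`. -/
lemma exists_inner_nonpos {A : Set E} (hA : (0 : E) ∈ convexHull ℝ A) (x : E) :
    ∃ y ∈ A, ⟪x, y⟫ ≤ 0 := by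
  by_contra h
  push_neg at h
  have hsub : A ⊆ {z : E | (0:ℝ) < ⟪x, z⟫} := fun z hz => (h z hz)
  have hconv : Convex ℝ {z : E | (0:ℝ) < ⟪x, z⟫} :=
    convex_halfSpace_gt ((innerₗ E x).isLinear) 0
  have := convexHull_min hsub hconv hA
  simp at this

/-- Variational inequality for the nearest point of a convex compact set. -/
lemma nearest_point_inner {K : Set E} (hK : Convex ℝ K) {x : E} (hx : x ∈ K)
    (hmin : infDist 0 K = dist 0 x) : ∀ w ∈ K, ‖x‖ ^ 2 ≤ ⟪x, w⟫ := by
  have hiInf : ‖(0:E) - x‖ = ⨅ w : K, ‖(0:E) - w‖ := by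
    rw [← dist_eq_norm, ← hmin, infDist_eq_iInf]
    congr 1; ext w; rw [dist_eq_norm]
  have h := (norm_eq_iInf_iff_real_inner_le_zero hK hx).mp hiInf
  intro w hw
  have := h w hw
  have hexp : ⟪(0:E) - x, w - x⟫ = -⟪x, w⟫ + ‖x‖ ^ 2 := by
    simp only [zero_sub, inner_neg_left, inner_sub_right, real_inner_self_eq_norm_sq]
    ring
  rw [hexp] at this
  linarith

open Module in
/-- An affinely independent finset on which `⟪x, ·⟫` is the constant `‖x‖^2 ≠ 0`
has at most `finrank ℝ E` elements. -/
lemma card_le_finrank_of_inner_eq {x : E} (hx : x ≠ 0) (t : Finset E)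
    (hai : AffineIndependent ℝ ((↑) : t → E))
    (h : ∀ y ∈ t, ⟪x, y⟫ = ‖x‖ ^ 2) : t.card ≤ finrank ℝ E := by
  rcases t.eq_empty_or_nonempty with rfl | hne
  · simp
  have : Nonempty {x // x ∈ t} := ⟨⟨hne.choose, hne.choose_spec⟩⟩
  set f : E →ₗ[ℝ] ℝ := innerₗ E x with hf
  have hcard : finrank ℝ (vectorSpan ℝ (Set.range ((↑) : t → E))) + 1 = t.card := by
    simpa using hai.finrank_vectorSpan_add_one
  have hrange : Set.range ((↑) : t → E) = (t : Set E) := Subtype.range_coe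
  have hsub : vectorSpan ℝ ((t : Set E)) ≤ LinearMap.ker f := by
    rw [vectorSpan_def, Submodule.span_le]
    rintro v ⟨p, hp, q, hq, rfl⟩
    simp only [SetLike.mem_coe, LinearMap.mem_ker, vsub_eq_sub, hf, innerₗ_apply_apply,
      inner_sub_right]
    rw [h p hp, h q hq, sub_self]
  have hfsurj : LinearMap.range f = ⊤ := by
    rw [LinearMap.range_eq_top]
    intro c
    refine ⟨(c / ‖x‖ ^ 2) • x, ?_⟩
    have hx2 : ‖x‖ ^ 2 ≠ 0 := pow_ne_zero 2 (norm_ne_zero_iff.mpr hx)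
    simp only [hf, innerₗ_apply_apply, real_inner_smul_right, real_inner_self_eq_norm_sq]
    field_simp
  have hrank := f.finrank_range_add_finrank_ker
  rw [hfsurj, finrank_top] at hrank
  have hker : finrank ℝ (LinearMap.ker f) + 1 = finrank ℝ E := by
    have : finrank ℝ ℝ = 1 := finrank_self ℝ
    omega
  have hmono : finrank ℝ (vectorSpan ℝ ((t : Set E))) ≤ finrank ℝ (LinearMap.ker f) :=
    Submodule.finrank_mono hsub
  rw [hrange] at hcard
  omega

/-- Carathéodory with positive weights: the supporting points lie where the
inner product with `x` attains its minimum value `‖x‖^2`. -/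
lemma exists_support_finset {x : E} {A : Set E} (hxA : x ∈ convexHull ℝ A)
    (hineq : ∀ w ∈ A, ‖x‖ ^ 2 ≤ ⟪x, w⟫) :
    ∃ t : Finset E, ↑t ⊆ A ∧ AffineIndependent ℝ ((↑) : t → E) ∧
      x ∈ convexHull ℝ (t : Set E) ∧ ∀ y ∈ t, ⟪x, y⟫ = ‖x‖ ^ 2 := by
  rw [convexHull_eq_union] at hxA
  simp only [Set.mem_iUnion] at hxA
  obtain ⟨T, hTA, hai, hxT⟩ := hxA
  rw [Finset.convexHull_eq] at hxT
  obtain ⟨w, hw0, hw1, hwx⟩ := hxT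
  classical
  refine ⟨T.filter (fun y => w y ≠ 0), ?_, ?_, ?_, ?_⟩
  · exact (Finset.coe_subset.mpr (Finset.filter_subset _ _)).trans hTA
  · exact hai.mono (Finset.coe_subset.mpr (Finset.filter_subset _ _))
  · rw [Finset.convexHull_eq]
    refine ⟨w, fun y hy => hw0 y (Finset.mem_of_mem_filter y hy), ?_, ?_⟩
    · rw [Finset.sum_filter_ne_zero, hw1]
    · rw [Finset.centerMass_filter_ne_zero, hwx]
  · -- all points in the support satisfy the equality
    have hxe : x = ∑ y ∈ T, w y • y := by
      rw [← hwx, Finset.centerMass_eq_of_sum_1 _ _ hw1]; rfl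
    have hxval : ⟪x, x⟫ = ∑ y ∈ T, w y * ⟪x, y⟫ := by
      nth_rewrite 2 [hxe]
      rw [inner_sum]
      exact Finset.sum_congr rfl fun y _ => real_inner_smul_right x y (w y)
    have hsum0 : ∑ y ∈ T, w y * (⟪x, y⟫ - ‖x‖ ^ 2) = 0 := by
      have : ∑ y ∈ T, w y * ‖x‖ ^ 2 = ‖x‖ ^ 2 := by
        rw [← Finset.sum_mul, hw1, one_mul]
      rw [Finset.sum_congr rfl (fun y _ => mul_sub (w y) _ _), Finset.sum_sub_distrib, this,
        ← hxval, real_inner_self_eq_norm_sq, sub_self]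
    have hterm := (Finset.sum_eq_zero_iff_of_nonneg (fun y hy =>
      mul_nonneg (hw0 y hy) (sub_nonneg.mpr (hineq y (hTA hy))))).mp hsum0
    intro y hy
    rw [Finset.mem_filter] at hy
    have := hterm y hy.1
    rcases mul_eq_zero.mp this with h | h
    · exact absurd h hy.2
    · linarith [sub_eq_zero.mp h]

/-- **Colorful Carathéodory Theorem.** For finite sets `C 0, …, C d` in `ℝ^d`,
each containing the origin in the relative interior of its convex hull, there is
a transversal (one point from each `C i`) whose convex hull contains the origin. -/
theorem colorful_caratheodory (d : ℕ)
    (C : Fin (d + 1) → Finset (EuclideanSpace ℝ (Fin d)))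
    (hcent : ∀ i, (0 : EuclideanSpace ℝ (Fin d)) ∈
      intrinsicInterior ℝ (convexHull ℝ (C i : Set (EuclideanSpace ℝ (Fin d))))) :
    ∃ s : Fin (d + 1) → EuclideanSpace ℝ (Fin d),
      (∀ i, s i ∈ C i) ∧
      (0 : EuclideanSpace ℝ (Fin d)) ∈ convexHull ℝ (Set.range s) := by
  classical
  have h0 : ∀ i, (0 : EuclideanSpace ℝ (Fin d)) ∈
      convexHull ℝ (C i : Set (EuclideanSpace ℝ (Fin d))) :=
    fun i => intrinsicInterior_subset (hcent i)
  have hne : ∀ i, ∃ y, y ∈ C i := by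
    intro i
    have : ((C i : Set (EuclideanSpace ℝ (Fin d)))).Nonempty :=
      convexHull_nonempty_iff.mp ⟨0, h0 i⟩
    exact ⟨this.choose, this.choose_spec⟩
  have : Nonempty (∀ i : Fin (d+1), {y // y ∈ C i}) :=
    ⟨fun i => ⟨(hne i).choose, (hne i).choose_spec⟩⟩
  obtain ⟨s₀, hs₀⟩ := Finite.exists_min (fun s : ∀ i : Fin (d+1), {y // y ∈ C i} =>
    Metric.infDist 0 (convexHull ℝ (Set.range fun i => (s i : EuclideanSpace ℝ (Fin d)))))
  set s : Fin (d+1) → EuclideanSpace ℝ (Fin d) := fun i => (s₀ i : EuclideanSpace ℝ (Fin d))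
    with hs
  set K := convexHull ℝ (Set.range s) with hKdef
  have hKco : IsCompact K := (Set.finite_range s).isCompact_convexHull ℝ
  have hKne : K.Nonempty := (Set.range_nonempty s).convexHull
  obtain ⟨x, hxK, hxd⟩ := hKco.exists_infDist_eq_dist hKne 0
  by_cases hx0 : x = 0
  · exact ⟨s, fun i => (s₀ i).2, hKdef ▸ hx0 ▸ hxK⟩
  exfalso
  have hconv : Convex ℝ K := hKdef ▸ convex_convexHull ℝ _
  have hineq := nearest_point_inner hconv hxK hxd
  have hineqA : ∀ w ∈ Set.range s, ‖x‖ ^ 2 ≤ ⟪x, w⟫ :=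
    fun w hw => hineq w (hKdef ▸ subset_convexHull ℝ _ hw)
  obtain ⟨t, htA, hai, hxt, hteq⟩ := exists_support_finset (hKdef ▸ hxK) hineqA
  have hcard : t.card ≤ d := by
    have := card_le_finrank_of_inner_eq hx0 t hai hteq
    rwa [finrank_euclideanSpace_fin] at this
  -- pick for each point of `t` a color using it
  set g : EuclideanSpace ℝ (Fin d) → Fin (d+1) :=
    fun y => if h : ∃ i, s i = y then h.choose else 0 with hgdef
  have hg : ∀ y ∈ t, s (g y) = y := by
    intro y hy
    have h : ∃ i, s i = y := htA hy
    simp only [hgdef, dif_pos h]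
    exact h.choose_spec
  -- a color not used by `t`
  obtain ⟨i, hi⟩ : ∃ i : Fin (d+1), i ∉ t.image g := by
    by_contra hall
    push_neg at hall
    have h1 := Finset.card_le_card (fun i _ => hall i : Finset.univ ⊆ t.image g)
    have h2 := Finset.card_image_le (f := g) (s := t)
    simp only [Finset.card_univ, Fintype.card_fin] at h1
    omega
  obtain ⟨y₀, hy₀C, hy₀⟩ := exists_inner_nonpos (h0 i) x
  -- new transversal
  set s₁ : ∀ j : Fin (d+1), {y // y ∈ C j} :=
    fun j => if h : j = i then (⟨y₀, by rw [h]; exact hy₀C⟩ : {y // y ∈ C j}) else s₀ j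
    with hs₁def
  set r : Fin (d+1) → EuclideanSpace ℝ (Fin d) := fun j => (s₁ j : EuclideanSpace ℝ (Fin d))
    with hrdef
  set K' := convexHull ℝ (Set.range r) with hK'def
  have hri : r i = y₀ := by simp [hrdef, hs₁def]
  have hrj : ∀ y ∈ t, r (g y) = y := by
    intro y hy
    have hgyi : g y ≠ i := by
      intro h
      exact hi (h ▸ Finset.mem_image_of_mem g hy)
    simp only [hrdef, hs₁def, dif_neg hgyi]
    exact hg y hy
  have ht' : (t : Set (EuclideanSpace ℝ (Fin d))) ⊆ Set.range r :=
    fun y hy => ⟨g y, hrj y hy⟩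
  have hxK' : x ∈ K' := hK'def ▸ convexHull_mono ht' hxt
  have hy₀K' : y₀ ∈ K' := hK'def ▸ subset_convexHull ℝ _ ⟨i, hri⟩
  -- the point on the segment closer to the origin
  set a := ‖x‖ ^ 2 with hadef
  set b := ‖y₀‖ ^ 2 with hbdef
  have ha : 0 < a := pow_pos (norm_pos_iff.mpr hx0) 2
  have hb : 0 ≤ b := sq_nonneg _
  set θ := a / (a + b) with hθdef
  have hab : 0 < a + b := by linarith
  have hθ0 : 0 < θ := div_pos ha hab
  have hθ1 : θ ≤ 1 := (div_le_one hab).mpr (by linarith)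
  set z := (1 - θ) • x + θ • y₀ with hzdef
  have hzK' : z ∈ K' :=
    (hK'def ▸ convex_convexHull ℝ (Set.range r)) hxK' hy₀K'
      (by linarith) (le_of_lt hθ0) (by ring)
  have hzsq : ‖z‖ ^ 2 = (1 - θ) ^ 2 * a + 2 * ((1 - θ) * θ) * ⟪x, y₀⟫ + θ ^ 2 * b := by
    rw [← real_inner_self_eq_norm_sq, hzdef]
    simp only [inner_add_left, inner_add_right, real_inner_smul_left, real_inner_smul_right]
    rw [real_inner_comm y₀ x, real_inner_self_eq_norm_sq, real_inner_self_eq_norm_sq,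
      ← hadef, ← hbdef]
    ring
  have hθc : θ * (a + b) = a := div_mul_cancel₀ a (ne_of_gt hab)
  have hlt : ‖z‖ ^ 2 < a := by
    have hcross : 2 * ((1 - θ) * θ) * ⟪x, y₀⟫ ≤ 0 := by
      apply mul_nonpos_of_nonneg_of_nonpos _ hy₀
      have : 0 ≤ (1 - θ) * θ := mul_nonneg (by linarith) (le_of_lt hθ0)
      linarith
    have key : (1 - θ) ^ 2 * a + θ ^ 2 * b < a := by nlinarith [mul_pos hθ0 ha]
    rw [hzsq]; linarith
  have hznorm : ‖z‖ < ‖x‖ := by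
    by_contra hcon
    push_neg at hcon
    have : ‖x‖ ^ 2 ≤ ‖z‖ ^ 2 := by
      apply pow_le_pow_left₀ (norm_nonneg x) hcon
    rw [← hadef] at this
    linarith
  have hmin := hs₀ s₁
  have hle : Metric.infDist 0 K' ≤ ‖z‖ := by
    have := Metric.infDist_le_dist_of_mem (x := (0 : EuclideanSpace ℝ (Fin d))) hzK'
    rwa [dist_zero_left] at this
  have hxnorm : Metric.infDist (0 : EuclideanSpace ℝ (Fin d)) K = ‖x‖ := by
    rw [hxd, dist_zero_left]
  have : Metric.infDist (0 : EuclideanSpace ℝ (Fin d)) K ≤ Metric.infDist 0 K' := hmin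
  linarith
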